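/- Let n ≥ 1 and let k_1, …, k_n ≥ 1 be integers such that the star-shaped graph Γ with branch lengths k_1, …, k_n is neither a Dynkin graph nor an extended Dynkin graph (i.e. it is not the case that n ≤ 2, nor that n = 3 with branch-length multiset {1,1,m} (m ≥ 1), {1,2,2}, {1,2,3} or {1,2,4}, nor that n = 4 with all branch lengths 1, nor that n = 3 with branch-length multiset {2,2,2}, {1,3,3} or {1,2,5}). Then the equation n − 1 − t = Σ_{l=1}^n 1/(1 + t + ⋯ + t^{k_l}) has exactly two solutions t_1, t_2 in [0, ∞), and these satisfy 0 < t_1 < 1 < t_2 < n − 1. -/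

import Mathlib

open Finset Set

noncomputable def SS (k : ℕ) (x : ℝ) : ℝ := ∑ i ∈ range (k+1), x ^ i
noncomputable def P1 (k : ℕ) (x : ℝ) : ℝ := ∑ j ∈ range k, ((j:ℝ)+1) * x ^ j
noncomputable def P2 (K : ℕ) (x : ℝ) : ℝ := ∑ m ∈ range K, ((m:ℝ)+2) * ((m:ℝ)+1) * x ^ m
noncomputable def QQ (k : ℕ) (x : ℝ) : ℝ := ∑ j ∈ range k, ((j:ℝ)+1) * ((k:ℝ)-(j:ℝ)) * x ^ j


lemma idA (k : ℕ) (x : ℝ) : (1 - x) * P1 k x = SS k x - ((k:ℝ)+1) * x ^ k := by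
  induction k with
  | zero => simp [P1, SS]
  | succ k ih =>
    rw [P1, Finset.sum_range_succ, ← P1, SS, Finset.sum_range_succ, ← SS]
    push_cast
    linear_combination ih

lemma idB (K : ℕ) (x : ℝ) : (1 - x) * P2 K x = 2 * P1 (K+1) x - ((K:ℝ)+1) * ((K:ℝ)+2) * x ^ K := by
  induction K with
  | zero => simp [P2, P1]
  | succ K ih =>
    rw [P2, Finset.sum_range_succ, ← P2]
    rw [show P1 (K+1+1) x = P1 (K+1) x + ((K:ℝ)+2) * x ^ (K+1) by
      rw [P1, Finset.sum_range_succ, ← P1]; push_cast; ring]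
    push_cast
    linear_combination ih

lemma Qsucc (k : ℕ) (x : ℝ) : QQ (k+1) x = QQ k x + P1 (k+1) x := by
  have h1 : QQ k x = ∑ j ∈ range (k+1), ((j:ℝ)+1) * ((k:ℝ)-(j:ℝ)) * x ^ j := by
    rw [Finset.sum_range_succ, ← QQ]; ring
  rw [QQ, h1, P1, ← Finset.sum_add_distrib]
  apply Finset.sum_congr rfl
  intro j _
  push_cast
  ring

lemma idC (k : ℕ) (x : ℝ) : (1 - x) * QQ k x = (k:ℝ) * SS k x - 2 * x * P1 k x := by
  induction k with
  | zero => simp [QQ, SS, P1]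
  | succ k ih =>
    rw [Qsucc, show SS (k+1) x = SS k x + x ^ (k+1) by rw [SS, Finset.sum_range_succ, ← SS],
      show P1 (k+1) x = P1 k x + ((k:ℝ)+1) * x ^ k by rw [P1, Finset.sum_range_succ, ← P1]]
    push_cast
    linear_combination ih + idA k x

lemma contSS (k : ℕ) : Continuous (SS k) := by
  unfold SS; exact continuous_finset_sum _ fun i _ => continuous_pow i
lemma contP1 (k : ℕ) : Continuous (P1 k) := by
  unfold P1; exact continuous_finset_sum _ fun i _ => continuous_const.mul (continuous_pow i)
lemma contP2 (K : ℕ) : Continuous (P2 K) := by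
  unfold P2; exact continuous_finset_sum _ fun i _ => continuous_const.mul (continuous_pow i)
lemma contQQ (k : ℕ) : Continuous (QQ k) := by
  unfold QQ; exact continuous_finset_sum _ fun i _ => continuous_const.mul (continuous_pow i)

lemma idD (K : ℕ) (x : ℝ) :
    2 * (P1 (K+1) x)^2 - SS (K+1) x * P2 K x = ((K:ℝ)+2) * x ^ K * QQ (K+1) x := by
  have hdense : Dense ({(1:ℝ)}ᶜ) := dense_compl_singleton 1
  have heq : (fun x => 2 * (P1 (K+1) x)^2 - SS (K+1) x * P2 K x)
      = fun x => ((K:ℝ)+2) * x ^ K * QQ (K+1) x := by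
    apply Continuous.ext_on hdense
    · exact (continuous_const.mul ((contP1 _).pow 2)).sub ((contSS _).mul (contP2 _))
    · exact (continuous_const.mul (continuous_pow K)).mul (contQQ _)
    · intro y hy
      have h1 : (1:ℝ) - y ≠ 0 := fun h => hy (by simp; linarith)
      apply mul_left_cancel₀ h1
      simp only
      have hA := idA (K+1) y; have hB := idB K y; have hC := idC (K+1) y
      push_cast at hA hC ⊢
      linear_combination (2 * P1 (K+1) y) * hA - SS (K+1) y * hB
        - (((K:ℝ)+2) * y ^ K) * hC
  exact congrFun heq x

lemma QQnonneg (k : ℕ) {x : ℝ} (hx : 0 ≤ x) : 0 ≤ QQ k x := by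
  apply Finset.sum_nonneg
  intro j hj
  have h1 : (j:ℝ) ≤ (k:ℝ) := by exact_mod_cast (Finset.mem_range.mp hj).le
  have h2 := pow_nonneg hx j
  have h3 : (0:ℝ) ≤ (j:ℝ)+1 := by positivity
  exact mul_nonneg (mul_nonneg h3 (by linarith)) h2

lemma SSpos (k : ℕ) {x : ℝ} (hx : 0 ≤ x) : 0 < SS k x := by
  rw [SS, Finset.sum_range_succ']
  have : 0 ≤ ∑ i ∈ range k, x ^ (i+1) := Finset.sum_nonneg fun i _ => pow_nonneg hx _
  simp only [pow_zero]
  linarith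

lemma keyineq (K : ℕ) {x : ℝ} (hx : 0 ≤ x) :
    SS (K+1) x * P2 K x ≤ 2 * (P1 (K+1) x)^2 := by
  have h := idD K x
  nlinarith [QQnonneg (K+1) hx, pow_nonneg hx K, mul_nonneg (mul_nonneg (by positivity : (0:ℝ) ≤ (K:ℝ)+2) (pow_nonneg hx K)) (QQnonneg (K+1) hx)]

lemma hasDerivSS (k : ℕ) (x : ℝ) : HasDerivAt (SS k) (P1 k x) x := by
  have h : HasDerivAt (fun y : ℝ => ∑ i ∈ range (k+1), y ^ i)
      (∑ i ∈ range (k+1), (i:ℝ) * x ^ (i-1)) x :=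
    HasDerivAt.fun_sum fun i _ => hasDerivAt_pow i x
  have e : (∑ i ∈ range (k+1), (i:ℝ) * x ^ (i-1)) = P1 k x := by
    rw [Finset.sum_range_succ', P1]
    simp only [Nat.cast_zero, zero_mul, add_zero, Nat.add_sub_cancel]
    apply Finset.sum_congr rfl
    intro j _
    push_cast
    ring
  exact e ▸ h

lemma hasDerivP1 (K : ℕ) (x : ℝ) : HasDerivAt (P1 (K+1)) (P2 K x) x := by
  have h : HasDerivAt (fun y : ℝ => ∑ j ∈ range (K+1), ((j:ℝ)+1) * y ^ j)
      (∑ j ∈ range (K+1), ((j:ℝ)+1) * ((j:ℝ) * x ^ (j-1))) x :=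
    HasDerivAt.fun_sum fun j _ => (hasDerivAt_pow j x).const_mul _
  have e : (∑ j ∈ range (K+1), ((j:ℝ)+1) * ((j:ℝ) * x ^ (j-1))) = P2 K x := by
    rw [Finset.sum_range_succ', P2]
    simp only [Nat.cast_zero, zero_mul, add_zero, mul_zero, Nat.add_sub_cancel]
    apply Finset.sum_congr rfl
    intro m _
    push_cast
    ring
  exact e ▸ h

lemma convexSS (K : ℕ) : ConvexOn ℝ (Ici 0) (fun x => (SS (K+1) x)⁻¹) := by
  apply convexOn_of_hasDerivWithinAt2_nonneg (convex_Ici 0)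
    (f' := fun x => -P1 (K+1) x / SS (K+1) x ^ 2)
    (f'' := fun x => (-P2 K x * SS (K+1) x ^ 2 -
      -P1 (K+1) x * (2 * SS (K+1) x ^ 1 * P1 (K+1) x)) / (SS (K+1) x ^ 2) ^ 2)
  · exact (contSS _).continuousOn.inv₀ fun x hx => (SSpos _ hx).ne'
  · intro x hx
    rw [interior_Ici] at hx
    exact ((hasDerivSS (K+1) x).inv (SSpos _ hx.le).ne').hasDerivWithinAt
  · intro x hx
    rw [interior_Ici] at hx
    have hne : SS (K+1) x ^ 2 ≠ 0 := pow_ne_zero _ (SSpos _ hx.le).ne'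
    exact ((hasDerivP1 K x).neg.div ((hasDerivSS (K+1) x).pow 2) hne).hasDerivWithinAt
  · intro x hx
    rw [interior_Ici] at hx
    have hS := SSpos (K+1) hx.le
    have hkey := keyineq K hx.le
    apply div_nonneg _ (by positivity)
    nlinarith [mul_nonneg hS.le (by linarith : (0:ℝ) ≤ 2 * P1 (K+1) x ^ 2 - SS (K+1) x * P2 K x)]

lemma bndr {m x : ℕ} (h : m ≤ x) : ((x:ℝ)+1)⁻¹ ≤ ((m:ℝ)+1)⁻¹ := by
  apply inv_anti₀ (by positivity)
  have : (m:ℝ) ≤ (x:ℝ) := by exact_mod_cast h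
  linarith

lemma ms1 (x y z : ℕ) : ({x,y,z} : Multiset ℕ) = {y,x,z} := Multiset.cons_swap x y {z}
lemma ms2 (x y z : ℕ) : ({x,y,z} : Multiset ℕ) = {x,z,y} := congrArg (x ::ₘ ·) (Multiset.cons_swap y z 0)
lemma ms3 (x y z : ℕ) : ({x,y,z} : Multiset ℕ) = {z,x,y} := (ms2 x y z).trans (ms1 x z y)

lemma three_sorted (a b c : ℕ) (ha : 1 ≤ a) (hab : a ≤ b) (hbc : b ≤ c)
    (E1 : ∀ m : ℕ, 1 ≤ m → ({a,b,c} : Multiset ℕ) ≠ {1,1,m})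
    (E2 : ({a,b,c} : Multiset ℕ) ≠ {1,2,2})
    (E3 : ({a,b,c} : Multiset ℕ) ≠ {1,2,3})
    (E4 : ({a,b,c} : Multiset ℕ) ≠ {1,2,4})
    (E5 : ({a,b,c} : Multiset ℕ) ≠ {2,2,2})
    (E6 : ({a,b,c} : Multiset ℕ) ≠ {1,3,3})
    (E7 : ({a,b,c} : Multiset ℕ) ≠ {1,2,5}) :
    ((a:ℝ)+1)⁻¹ + ((b:ℝ)+1)⁻¹ + ((c:ℝ)+1)⁻¹ < 1 := by
  have hc1 : 1 ≤ c := le_trans ha (le_trans hab hbc)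
  rcases Nat.lt_or_ge a 2 with ha1 | ha2
  · have ha' : a = 1 := by omega
    subst ha'
    rcases Nat.lt_or_ge b 2 with hb1 | hb2
    · have hb' : b = 1 := by omega
      subst hb'
      exact absurd rfl (E1 c hc1)
    · rcases Nat.lt_or_ge b 4 with hb4 | hb4
      · interval_cases b
        · -- b = 2
          have hc6 : 6 ≤ c := by
            by_contra h
            interval_cases c
            · exact E2 rfl
            · exact E3 rfl
            · exact E4 rfl
            · exact E7 rfl
          have h1 := bndr hc6
          norm_num at h1 ⊢
          linarith
        · -- b = 3
          have hc4 : 4 ≤ c := by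
            by_contra h
            have : c = 3 := by omega
            subst this
            exact E6 rfl
          have h1 := bndr hc4
          norm_num at h1 ⊢
          linarith
      · have h1 := bndr hb4
        have h2 := bndr (le_trans hb4 hbc)
        norm_num at h1 h2 ⊢
        linarith
  · rcases Nat.lt_or_ge c 3 with hc3 | hc3
    · have : a = 2 ∧ b = 2 ∧ c = 2 := by omega
      obtain ⟨rfl, rfl, rfl⟩ := this
      exact absurd rfl E5
    · have h1 := bndr ha2
      have h2 := bndr (le_trans ha2 hab)
      have h3 := bndr hc3
      norm_num at h1 h2 h3 ⊢
      linarith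

lemma three (a b c : ℕ) (ha : 1 ≤ a) (hb : 1 ≤ b) (hc : 1 ≤ c)
    (E1 : ∀ m : ℕ, 1 ≤ m → ({a,b,c} : Multiset ℕ) ≠ {1,1,m})
    (E2 : ({a,b,c} : Multiset ℕ) ≠ {1,2,2})
    (E3 : ({a,b,c} : Multiset ℕ) ≠ {1,2,3})
    (E4 : ({a,b,c} : Multiset ℕ) ≠ {1,2,4})
    (E5 : ({a,b,c} : Multiset ℕ) ≠ {2,2,2})
    (E6 : ({a,b,c} : Multiset ℕ) ≠ {1,3,3})
    (E7 : ({a,b,c} : Multiset ℕ) ≠ {1,2,5}) :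
    ((a:ℝ)+1)⁻¹ + ((b:ℝ)+1)⁻¹ + ((c:ℝ)+1)⁻¹ < 1 := by
  rcases le_total a b with h1 | h1 <;> rcases le_total b c with h2 | h2 <;>
    rcases le_total a c with h3 | h3
  · have := three_sorted a b c ha h1 h2 E1 E2 E3 E4 E5 E6 E7; linarith
  · have := three_sorted a b c ha h1 h2 E1 E2 E3 E4 E5 E6 E7; linarith
  · -- a ≤ b, c ≤ b, a ≤ c : order a c b
    have e : ({a,c,b} : Multiset ℕ) = {a,b,c} := ms2 a c b
    have := three_sorted a c b ha h3 h2 (fun m hm => e ▸ E1 m hm) (e ▸ E2) (e ▸ E3)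
      (e ▸ E4) (e ▸ E5) (e ▸ E6) (e ▸ E7)
    linarith
  · -- a ≤ b, c ≤ b, c ≤ a : order c a b
    have e : ({c,a,b} : Multiset ℕ) = {a,b,c} := (ms3 a b c).symm
    have := three_sorted c a b hc h3 h1 (fun m hm => e ▸ E1 m hm) (e ▸ E2) (e ▸ E3)
      (e ▸ E4) (e ▸ E5) (e ▸ E6) (e ▸ E7)
    linarith
  · -- b ≤ a, b ≤ c, a ≤ c : order b a c
    have e : ({b,a,c} : Multiset ℕ) = {a,b,c} := (ms1 a b c).symm
    have := three_sorted b a c hb h1 h3 (fun m hm => e ▸ E1 m hm) (e ▸ E2) (e ▸ E3)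
      (e ▸ E4) (e ▸ E5) (e ▸ E6) (e ▸ E7)
    linarith
  · -- b ≤ a, b ≤ c, c ≤ a : order b c a
    have e : ({b,c,a} : Multiset ℕ) = {a,b,c} := ms3 b c a
    have := three_sorted b c a hb h2 h3 (fun m hm => e ▸ E1 m hm) (e ▸ E2) (e ▸ E3)
      (e ▸ E4) (e ▸ E5) (e ▸ E6) (e ▸ E7)
    linarith
  · -- c ≤ b, b ≤ a? no: case: b ≤ a? list: h1 : b ≤ a, h2 : c ≤ b?? recheck ordering of cases
    have e : ({c,b,a} : Multiset ℕ) = {a,b,c} := (ms1 c b a).trans (ms3 b c a)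
    have := three_sorted c b a hc h2 h1 (fun m hm => e ▸ E1 m hm) (e ▸ E2) (e ▸ E3)
      (e ▸ E4) (e ▸ E5) (e ▸ E6) (e ▸ E7)
    linarith
  · have e : ({c,b,a} : Multiset ℕ) = {a,b,c} := (ms1 c b a).trans (ms3 b c a)
    have := three_sorted c b a hc h2 h1 (fun m hm => e ▸ E1 m hm) (e ▸ E2) (e ▸ E3)
      (e ▸ E4) (e ▸ E5) (e ▸ E6) (e ▸ E7)
    linarith

lemma convex_sum_aux {n : ℕ} (k : Fin n → ℕ) (hk : ∀ l, 1 ≤ k l) :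
    ConvexOn ℝ (Ici 0) (fun x : ℝ => ∑ l : Fin n, (SS (k l) x)⁻¹) := by
  classical
  induction (Finset.univ : Finset (Fin n)) using Finset.cons_induction with
  | empty => simpa using convexOn_const 0 (convex_Ici 0)
  | cons i s hi ih =>
    simp only [Finset.sum_cons]
    refine ConvexOn.add ?_ ih
    obtain ⟨K, hK⟩ : ∃ K, k i = K + 1 := ⟨k i - 1, by have := hk i; omega⟩
    rw [hK]
    exact convexSS K

lemma conv_combo {f : ℝ → ℝ} (hf : ConvexOn ℝ (Ici 0) f) {u t v : ℝ} (hu : 0 ≤ u)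
    (h1 : u < t) (h2 : t < v) :
    f t ≤ ((v-t)/(v-u)) * f u + ((t-u)/(v-u)) * f v := by
  have hv : (0:ℝ) ≤ v := le_trans hu (le_of_lt (lt_trans h1 h2))
  have hd : (0:ℝ) < v - u := by linarith
  have ha : (0:ℝ) ≤ (v-t)/(v-u) := div_nonneg (by linarith) hd.le
  have hb : (0:ℝ) ≤ (t-u)/(v-u) := div_nonneg (by linarith) hd.le
  have hab : (v-t)/(v-u) + (t-u)/(v-u) = 1 := by field_simp; ring
  have harg : ((v-t)/(v-u)) * u + ((t-u)/(v-u)) * v = t := by field_simp; ring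
  have := hf.2 (mem_Ici.mpr hu) (mem_Ici.mpr hv) ha hb hab
  simpa [smul_eq_mul, harg] using this

lemma bnd_half {x : ℕ} (h : 1 ≤ x) : ((x:ℝ)+1)⁻¹ ≤ 1/2 := by
  have := bndr h; norm_num at this; linarith
lemma bnd_third {x : ℕ} (h : 2 ≤ x) : ((x:ℝ)+1)⁻¹ ≤ 1/3 := by
  have := bndr h; norm_num at this; linarith
/-- If the star-shaped graph with branch lengths `k_1, …, k_n` is neither a
Dynkin graph nor an extended Dynkin graph, then the equation
`n − 1 − t = Σ_{l=1}^n 1/(1 + t + ⋯ + t^{k_l})` has exactly two solutions `t₁, t₂` in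
`[0, ∞)`, and these satisfy `0 < t₁ < 1 < t₂ < n − 1`. -/
theorem stmt_2 (n : ℕ) (hn : 1 ≤ n) (k : Fin n → ℕ) (hk : ∀ l, 1 ≤ k l)
    (hnotDynkin : ¬ (n ≤ 2 ∨
      (n = 3 ∧
        ((∃ m : ℕ, 1 ≤ m ∧ Multiset.map k Finset.univ.val = {1, 1, m}) ∨
          Multiset.map k Finset.univ.val = {1, 2, 2} ∨
          Multiset.map k Finset.univ.val = {1, 2, 3} ∨
          Multiset.map k Finset.univ.val = {1, 2, 4}))))
    (hnotExtDynkin : ¬ ((n = 4 ∧ ∀ l, k l = 1) ∨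
      (n = 3 ∧
        (Multiset.map k Finset.univ.val = {2, 2, 2} ∨
          Multiset.map k Finset.univ.val = {1, 3, 3} ∨
          Multiset.map k Finset.univ.val = {1, 2, 5})))) :
    ∃ t₁ t₂ : ℝ,
      0 < t₁ ∧ t₁ < 1 ∧ 1 < t₂ ∧ t₂ < (n : ℝ) - 1 ∧
      ((n : ℝ) - 1 - t₁ = ∑ l : Fin n, 1 / ∑ i ∈ Finset.range (k l + 1), t₁ ^ i) ∧
      ((n : ℝ) - 1 - t₂ = ∑ l : Fin n, 1 / ∑ i ∈ Finset.range (k l + 1), t₂ ^ i) ∧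
      ∀ t : ℝ, 0 ≤ t →
        (n : ℝ) - 1 - t = (∑ l : Fin n, 1 / ∑ i ∈ Finset.range (k l + 1), t ^ i) →
        t = t₁ ∨ t = t₂ := by
  rw [not_or] at hnotDynkin hnotExtDynkin
  obtain ⟨hn2, hD3⟩ := hnotDynkin
  obtain ⟨hE4, hE3⟩ := hnotExtDynkin
  have hn3 : 3 ≤ n := by omega
  -- the sum bound at t = 1
  have hsum : ∑ l : Fin n, ((k l : ℝ) + 1)⁻¹ < (n : ℝ) - 2 := by
    rcases Nat.lt_or_ge n 5 with h5 | h5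
    · interval_cases n
      · -- n = 3
        have hM : Multiset.map k Finset.univ.val = {k 0, k 1, k 2} := rfl
        rw [hM] at hD3 hE3
        rw [Fin.sum_univ_three]
        have h3 := three (k 0) (k 1) (k 2) (hk 0) (hk 1) (hk 2)
          (fun m hm h => hD3 ⟨rfl, Or.inl ⟨m, hm, h⟩⟩)
          (fun h => hD3 ⟨rfl, Or.inr (Or.inl h)⟩)
          (fun h => hD3 ⟨rfl, Or.inr (Or.inr (Or.inl h))⟩)
          (fun h => hD3 ⟨rfl, Or.inr (Or.inr (Or.inr h))⟩)
          (fun h => hE3 ⟨rfl, Or.inl h⟩)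
          (fun h => hE3 ⟨rfl, Or.inr (Or.inl h)⟩)
          (fun h => hE3 ⟨rfl, Or.inr (Or.inr h)⟩)
        push_cast
        push_cast at h3
        norm_num
        linarith
      · -- n = 4
        have : ∃ l₀ : Fin 4, 2 ≤ k l₀ := by
          by_contra h
          push_neg at h
          exact hE4 ⟨rfl, fun l => by have := hk l; have := h l; omega⟩
        obtain ⟨l₀, hl₀⟩ := this
        have hsplit : ∑ l : Fin 4, ((k l : ℝ) + 1)⁻¹
            = ((k l₀ : ℝ) + 1)⁻¹ + ∑ l ∈ Finset.univ.erase l₀, ((k l : ℝ) + 1)⁻¹ :=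
          (Finset.add_sum_erase _ _ (mem_univ _)).symm
        have h1 : ((k l₀ : ℝ) + 1)⁻¹ ≤ (1/3 : ℝ) := bnd_third hl₀
        have h2 : ∑ l ∈ Finset.univ.erase l₀, ((k l : ℝ) + 1)⁻¹ ≤ 3 * (1/2 : ℝ) := by
          have hb : ∀ l ∈ Finset.univ.erase l₀, ((k l : ℝ) + 1)⁻¹ ≤ (1/2 : ℝ) := by
            intro l _
            exact bnd_half (hk l)
          calc ∑ l ∈ Finset.univ.erase l₀, ((k l : ℝ) + 1)⁻¹
              ≤ ∑ _l ∈ Finset.univ.erase l₀, (1/2 : ℝ) := Finset.sum_le_sum hb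
            _ = 3 * (1/2 : ℝ) := by
                rw [Finset.sum_const, Finset.card_erase_of_mem (mem_univ _)]
                simp
          
        rw [hsplit]
        norm_num
        linarith
    · -- n ≥ 5
      have hb : ∀ l ∈ (Finset.univ : Finset (Fin n)), ((k l : ℝ) + 1)⁻¹ ≤ (1/2 : ℝ) := by
        intro l _
        exact bnd_half (hk l)
      have h1 : ∑ l : Fin n, ((k l : ℝ) + 1)⁻¹ ≤ (n : ℝ) * (1/2) := by
        calc ∑ l : Fin n, ((k l : ℝ) + 1)⁻¹ ≤ ∑ _l : Fin n, (1/2 : ℝ) := Finset.sum_le_sum hb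
          _ = (n : ℝ) * (1/2) := by simp [Finset.sum_const, Finset.card_univ]
      have h5' : (5:ℝ) ≤ (n:ℝ) := by exact_mod_cast h5
      linarith
  -- set up G
  obtain ⟨G, hGdef⟩ : ∃ G : ℝ → ℝ, G = fun t => (∑ l : Fin n, (SS (k l) t)⁻¹) + t := ⟨_, rfl⟩
  have hGeval : ∀ t : ℝ, G t = (∑ l : Fin n, (SS (k l) t)⁻¹) + t := fun t => by rw [hGdef]
  have hiff : ∀ t : ℝ,
      ((n : ℝ) - 1 - t = ∑ l : Fin n, 1 / ∑ i ∈ Finset.range (k l + 1), t ^ i) ↔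
        G t = (n : ℝ) - 1 := by
    intro t
    have : (∑ l : Fin n, 1 / ∑ i ∈ Finset.range (k l + 1), t ^ i)
        = ∑ l : Fin n, (SS (k l) t)⁻¹ := by
      apply Finset.sum_congr rfl
      intro l _
      rw [one_div]
      rfl
    rw [this, hGeval t]
    constructor <;> intro h <;> linarith
  have hGconv : ConvexOn ℝ (Ici 0) G := by
    rw [hGdef]
    exact (convex_sum_aux k hk).add (convexOn_id (convex_Ici 0))
  have hGcont : ContinuousOn G (Ici 0) := by
    rw [hGdef]
    apply ContinuousOn.add _ continuousOn_id
    apply continuousOn_finset_sum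
    intro l _
    exact ((contSS (k l)).continuousOn).inv₀ fun x hx => (SSpos _ hx).ne'
  have hSS0 : ∀ m : ℕ, SS m 0 = 1 := by
    intro m
    rw [SS, Finset.sum_range_succ']
    simp
  have hSS1 : ∀ m : ℕ, SS m 1 = (m : ℝ) + 1 := by
    intro m
    rw [SS]
    simp [Finset.sum_const, Finset.card_range]
  have hG0 : G 0 = (n : ℝ) := by
    rw [hGeval]
    simp [hSS0, Finset.card_univ]
  have hG1 : G 1 < (n : ℝ) - 1 := by
    have : G 1 = (∑ l : Fin n, ((k l : ℝ) + 1)⁻¹) + 1 := by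
      rw [hGeval]
      congr 1
      exact Finset.sum_congr rfl fun l _ => by rw [hSS1]
    rw [this]
    linarith
  have hcn : (1:ℝ) < (n:ℝ) - 1 := by
    have : (3:ℝ) ≤ (n:ℝ) := by exact_mod_cast hn3
    linarith
  have hGc : (n : ℝ) - 1 < G ((n:ℝ) - 1) := by
    have hpos : 0 < ∑ l : Fin n, (SS (k l) ((n:ℝ)-1))⁻¹ := by
      apply Finset.sum_pos
      · intro l _
        exact inv_pos.mpr (SSpos _ (by linarith))
      · exact ⟨⟨0, by omega⟩, mem_univ _⟩
    rw [hGeval]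
    linarith
  -- IVT
  have hIVT1 : ∃ t₁ ∈ Ioo (0:ℝ) 1, G t₁ = (n:ℝ) - 1 := by
    have hsub : Icc (0:ℝ) 1 ⊆ Ici 0 := Icc_subset_Ici_self
    have := intermediate_value_Ioo' (by norm_num : (0:ℝ) ≤ 1) (hGcont.mono hsub)
    have hmem : (n:ℝ) - 1 ∈ Ioo (G 1) (G 0) := ⟨hG1, by rw [hG0]; linarith⟩
    obtain ⟨t₁, ht₁, hGt₁⟩ := this hmem
    exact ⟨t₁, ht₁, hGt₁⟩
  have hIVT2 : ∃ t₂ ∈ Ioo (1:ℝ) ((n:ℝ)-1), G t₂ = (n:ℝ) - 1 := by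
    have hsub : Icc (1:ℝ) ((n:ℝ)-1) ⊆ Ici 0 := fun x hx => by
      simp only [Set.mem_Icc] at hx; simp only [Set.mem_Ici]; linarith [hx.1]
    have := intermediate_value_Ioo hcn.le (hGcont.mono hsub)
    have hmem : (n:ℝ) - 1 ∈ Ioo (G 1) (G ((n:ℝ)-1)) := ⟨hG1, hGc⟩
    obtain ⟨t₂, ht₂, hGt₂⟩ := this hmem
    exact ⟨t₂, ht₂, hGt₂⟩
  obtain ⟨t₁, ⟨ht₁0, ht₁1⟩, hGt₁⟩ := hIVT1
  obtain ⟨t₂, ⟨ht₂1, ht₂c⟩, hGt₂⟩ := hIVT2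
  refine ⟨t₁, t₂, ht₁0, ht₁1, ht₂1, ht₂c, (hiff t₁).mpr hGt₁, (hiff t₂).mpr hGt₂, ?_⟩
  intro t ht hteq
  have hGt : G t = (n:ℝ) - 1 := (hiff t).mp hteq
  by_contra hcon
  push_neg at hcon
  obtain ⟨hne1, hne2⟩ := hcon
  rcases lt_trichotomy t t₁ with h | h | h
  · -- t < t₁ < 1 : G t₁ ≤ α G t + β G 1 with β > 0
    have hc := conv_combo hGconv ht h (by linarith : t₁ < 1)
    have hne0 : (1:ℝ) - t ≠ 0 := by linarith
    have hsum1 : (1 - t₁)/(1 - t) + (t₁ - t)/(1 - t) = 1 := by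
      field_simp; ring
    have hβ : 0 < (t₁ - t)/(1 - t) := div_pos (by linarith) (by linarith)
    have hmul : ((1 - t₁)/(1 - t)) * ((n:ℝ)-1) + ((t₁ - t)/(1 - t)) * ((n:ℝ)-1) = (n:ℝ)-1 := by
      rw [← add_mul, hsum1, one_mul]
    linarith [mul_lt_mul_of_pos_left hG1 hβ,
      mul_le_mul_of_nonneg_left (le_of_eq hGt) (div_nonneg (by linarith) (by linarith) : (0:ℝ) ≤ (1 - t₁)/(1 - t)), hmul]
  · exact hne1 h
  · rcases lt_trichotomy t 1 with h' | h' | h'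
    · -- t₁ < t < 1
      have hc := conv_combo hGconv (by linarith : (0:ℝ) ≤ t₁) h h'
      have hβ : 0 < (t - t₁)/(1 - t₁) := div_pos (by linarith) (by linarith)
      have hne0 : (1:ℝ) - t₁ ≠ 0 := by linarith
      have hsum1 : (1 - t)/(1 - t₁) + (t - t₁)/(1 - t₁) = 1 := by field_simp; ring
      have hmul : ((1 - t)/(1 - t₁)) * ((n:ℝ)-1) + ((t - t₁)/(1 - t₁)) * ((n:ℝ)-1) = (n:ℝ)-1 := by
        rw [← add_mul, hsum1, one_mul]
      linarith [mul_lt_mul_of_pos_left hG1 hβ,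
        mul_le_mul_of_nonneg_left (le_of_eq hGt₁) (div_nonneg (by linarith) (by linarith) : (0:ℝ) ≤ (1 - t)/(1 - t₁)), hmul]
    · rw [h'] at hGt; linarith
    · rcases lt_trichotomy t t₂ with h'' | h'' | h''
      · -- 1 < t < t₂
        have hc := conv_combo hGconv (by norm_num : (0:ℝ) ≤ 1) h' h''
        have hα : 0 < (t₂ - t)/(t₂ - 1) := div_pos (by linarith) (by linarith)
        have hne0 : t₂ - (1:ℝ) ≠ 0 := by linarith
        have hsum1 : (t₂ - t)/(t₂ - 1) + (t - 1)/(t₂ - 1) = 1 := by field_simp; ring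
        have hmul : ((t₂ - t)/(t₂ - 1)) * ((n:ℝ)-1) + ((t - 1)/(t₂ - 1)) * ((n:ℝ)-1) = (n:ℝ)-1 := by
          rw [← add_mul, hsum1, one_mul]
        linarith [mul_lt_mul_of_pos_left hG1 hα,
          mul_le_mul_of_nonneg_left (le_of_eq hGt₂) (div_nonneg (by linarith) (by linarith) : (0:ℝ) ≤ (t - 1)/(t₂ - 1)), hmul]
      · exact hne2 h''
      · -- t₂ < t
        have hc := conv_combo hGconv (by norm_num : (0:ℝ) ≤ 1) (by linarith : (1:ℝ) < t₂) h''
        have hα : 0 < (t - t₂)/(t - 1) := div_pos (by linarith) (by linarith)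
        have hne0 : t - (1:ℝ) ≠ 0 := by linarith
        have hsum1 : (t - t₂)/(t - 1) + (t₂ - 1)/(t - 1) = 1 := by field_simp; ring
        have hmul : ((t₂ - 1)/(t - 1)) * ((n:ℝ)-1) + ((t - t₂)/(t - 1)) * ((n:ℝ)-1) = (n:ℝ)-1 := by
          rw [← add_mul]
          rw [show (t₂ - 1)/(t - 1) + (t - t₂)/(t - 1) = 1 by field_simp; ring, one_mul]
        linarith [mul_lt_mul_of_pos_left hG1 hα,
          mul_le_mul_of_nonneg_left (le_of_eq hGt) (div_nonneg (by linarith) (by linarith) : (0:ℝ) ≤ (t₂ - 1)/(t - 1)), hmul]
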